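/- Let N ∈ ℕ. For 0 ≤ k < N let f_{x,k} ∈ ℝ^{n×n}, f_{u,k} ∈ ℝ^{n×m}, f_{θ,k} ∈ ℝ^{n×p}, symmetric H_{xx,k} ∈ ℝ^{n×n} and H_{uu,k} ∈ ℝ^{m×m}, and H_{xu,k} ∈ ℝ^{n×m}, H_{xθ,k} ∈ ℝ^{n×p}, H_{uθ,k} ∈ ℝ^{m×p}; let H_{xx,N} ∈ ℝ^{n×n} be symmetric and H_{xθ,N} ∈ ℝ^{n×p}. Define backward recursions: V_{xx,N} = H_{xx,N}, V_{xθ,N} = H_{xθ,N}; for k = N−1,…,0: Q_{uu,k} = H_{uu,k} + f_{u,k}ᵀ V_{xx,k+1} f_{u,k} (assumed positive definite), Q_{ux,k} = H_{xu,k}ᵀ + f_{u,k}ᵀ V_{xx,k+1} f_{x,k}, Q_{xx,k} = H_{xx,k} + f_{x,k}ᵀ V_{xx,k+1} f_{x,k}, Q_{xθ,k} = H_{xθ,k} + f_{x,k}ᵀ V_{xθ,k+1} + f_{x,k}ᵀ V_{xx,k+1} f_{θ,k}, Q_{uθ,k} = H_{uθ,k} + f_{u,k}ᵀ V_{xθ,k+1}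 + f_{u,k}ᵀ V_{xx,k+1} f_{θ,k}, K_k = −Q_{uu,k}^{-1} Q_{ux,k}, K_k^{ff} = −Q_{uu,k}^{-1} Q_{uθ,k}, V_{xx,k} = Q_{xx,k} − Q_{ux,k}ᵀ Q_{uu,k}^{-1} Q_{ux,k}, V_{xθ,k} = Q_{xθ,k} − Q_{ux,k}ᵀ Q_{uu,k}^{-1} Q_{uθ,k}. Define forward recursions: X_0 = 0, U_k = K_k X_k + K_k^{ff}, X_{k+1} = f_{x,k} X_k + f_{u,k} U_k + f_{θ,k}, and set Λ_k = V_{xx,k} X_k + V_{xθ,k} for 0 ≤ k ≤ N. Then Λ_N = H_{xx,N} X_N + H_{xθ,N}, and for every 0 ≤ k < N: (a) Λ_k = H_{xx,k} X_k + H_{xu,k} U_k + H_{xθ,k} + f_{x,k}ᵀ Λ_{k+1}, and (b) 0 = H_{xu,k}ᵀ X_k + H_{uu,k} U_k + H_{uθ,k} + f_{u,k}ᵀ Λ_{k+1}. -/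
import Mathlib


open Matrix

/-- Lemmas 1–2 of the paper combined: the trajectory generated by the backward
Riccati recursions (with gains `K_k = −Q_{uu,k}⁻¹ Q_{ux,k}`,
`K_k^ff = −Q_{uu,k}⁻¹ Q_{uθ,k}` reused from DDP) followed by the forward
closed-loop rollout `U_k = K_k X_k + K_k^ff`,
`X_{k+1} = f_{x,k} X_k + f_{u,k} U_k + f_{θ,k}` with `X_0 = 0`, together with
the matrix-valued costate `Λ_k = V_{xx,k} X_k + V_{xθ,k}`, satisfies the
differential PMP conditions:
`Λ_N = H_{xx,N} X_N + H_{xθ,N}`, and for all `k < N`,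
(a) `Λ_k = H_{xx,k} X_k + H_{xu,k} U_k + H_{xθ,k} + f_{x,k}ᵀ Λ_{k+1}` and
(b) `0 = H_{xu,k}ᵀ X_k + H_{uu,k} U_k + H_{uθ,k} + f_{u,k}ᵀ Λ_{k+1}`. -/
theorem stmt11 {n m p : ℕ} (N : ℕ)
    (fx : ℕ → Matrix (Fin n) (Fin n) ℝ)
    (fu : ℕ → Matrix (Fin n) (Fin m) ℝ)
    (fθ : ℕ → Matrix (Fin n) (Fin p) ℝ)
    (Hxx : ℕ → Matrix (Fin n) (Fin n) ℝ)
    (Huu : ℕ → Matrix (Fin m) (Fin m) ℝ)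
    (Hxu : ℕ → Matrix (Fin n) (Fin m) ℝ)
    (Hxθ : ℕ → Matrix (Fin n) (Fin p) ℝ)
    (Huθ : ℕ → Matrix (Fin m) (Fin p) ℝ)
    (HxxN : Matrix (Fin n) (Fin n) ℝ) (hHxxN : HxxN.IsHermitian)
    (HxθN : Matrix (Fin n) (Fin p) ℝ)
    (hHxx : ∀ k < N, (Hxx k).IsHermitian)
    (hHuu : ∀ k < N, (Huu k).IsHermitian)
    -- backward Riccati recursions
    (Vxx : ℕ → Matrix (Fin n) (Fin n) ℝ)
    (Vxθ : ℕ → Matrix (Fin n) (Fin p) ℝ)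
    (Quu : ℕ → Matrix (Fin m) (Fin m) ℝ)
    (Qux : ℕ → Matrix (Fin m) (Fin n) ℝ)
    (Qxx : ℕ → Matrix (Fin n) (Fin n) ℝ)
    (Qxθ : ℕ → Matrix (Fin n) (Fin p) ℝ)
    (Quθ : ℕ → Matrix (Fin m) (Fin p) ℝ)
    (K : ℕ → Matrix (Fin m) (Fin n) ℝ)
    (Kff : ℕ → Matrix (Fin m) (Fin p) ℝ)
    (hVxxN : Vxx N = HxxN) (hVxθN : Vxθ N = HxθN)
    (hQuu : ∀ k < N, Quu k = Huu k + (fu k)ᵀ * Vxx (k + 1) * fu k)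
    (hQuuPD : ∀ k < N, (Quu k).PosDef)
    (hQux : ∀ k < N, Qux k = (Hxu k)ᵀ + (fu k)ᵀ * Vxx (k + 1) * fx k)
    (hQxx : ∀ k < N, Qxx k = Hxx k + (fx k)ᵀ * Vxx (k + 1) * fx k)
    (hQxθ : ∀ k < N,
      Qxθ k = Hxθ k + (fx k)ᵀ * Vxθ (k + 1) + (fx k)ᵀ * Vxx (k + 1) * fθ k)
    (hQuθ : ∀ k < N,
      Quθ k = Huθ k + (fu k)ᵀ * Vxθ (k + 1) + (fu k)ᵀ * Vxx (k + 1) * fθ k)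
    (hK : ∀ k < N, K k = -((Quu k)⁻¹ * Qux k))
    (hKff : ∀ k < N, Kff k = -((Quu k)⁻¹ * Quθ k))
    (hVxx : ∀ k < N, Vxx k = Qxx k - (Qux k)ᵀ * (Quu k)⁻¹ * Qux k)
    (hVxθ : ∀ k < N, Vxθ k = Qxθ k - (Qux k)ᵀ * (Quu k)⁻¹ * Quθ k)
    -- forward recursions
    (X : ℕ → Matrix (Fin n) (Fin p) ℝ)
    (U : ℕ → Matrix (Fin m) (Fin p) ℝ)
    (Λ : ℕ → Matrix (Fin n) (Fin p) ℝ)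
    (hX0 : X 0 = 0)
    (hU : ∀ k < N, U k = K k * X k + Kff k)
    (hXs : ∀ k < N, X (k + 1) = fx k * X k + fu k * U k + fθ k)
    (hΛ : ∀ k ≤ N, Λ k = Vxx k * X k + Vxθ k) :
    Λ N = HxxN * X N + HxθN ∧
    ∀ k < N,
      (Λ k = Hxx k * X k + Hxu k * U k + Hxθ k + (fx k)ᵀ * Λ (k + 1)) ∧
      (0 = (Hxu k)ᵀ * X k + Huu k * U k + Huθ k + (fu k)ᵀ * Λ (k + 1)) := by
  have hVsym : ∀ k, k ≤ N → (Vxx k)ᵀ = Vxx k := by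
    have key : ∀ d k, k + d = N → (Vxx k)ᵀ = Vxx k := by
      intro d
      induction d with
      | zero =>
        intro k hk
        rw [Nat.add_zero] at hk; subst hk
        rw [hVxxN, ← conjTranspose_eq_transpose_of_trivial, hHxxN.eq]
      | succ d ih =>
        intro k hk
        have hkN : k < N := by omega
        have hnext : (Vxx (k + 1))ᵀ = Vxx (k + 1) := ih (k + 1) (by omega)
        have hsym : ((Quu k)⁻¹)ᵀ = (Quu k)⁻¹ := by
          have h := (hQuuPD k hkN).isHermitian.inv
          rw [← conjTranspose_eq_transpose_of_trivial, h.eq]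
        have hQxxsym : (Qxx k)ᵀ = Qxx k := by
          have hH : (Hxx k)ᵀ = Hxx k := by
            rw [← conjTranspose_eq_transpose_of_trivial, (hHxx k hkN).eq]
          rw [hQxx k hkN]
          simp [Matrix.transpose_add, Matrix.transpose_mul, hH, hnext, Matrix.mul_assoc]
        rw [hVxx k hkN]
        simp [Matrix.transpose_sub, Matrix.transpose_mul, hQxxsym, hsym, Matrix.mul_assoc]
    intro k hk
    exact key (N - k) k (by omega)
  constructor
  · rw [hΛ N le_rfl, hVxxN, hVxθN]
  · intro k hk
    have hdet : IsUnit (Quu k).det := by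
      have := (hQuuPD k hk).isUnit
      rwa [Matrix.isUnit_iff_isUnit_det] at this
    have hinv : Quu k * (Quu k)⁻¹ = 1 := Matrix.mul_nonsing_inv _ hdet
    have e1 : Quu k * U k = -(Qux k * X k) - Quθ k := by
      rw [hU k hk, hK k hk, hKff k hk]
      simp [Matrix.mul_add, Matrix.mul_neg, ← Matrix.mul_assoc, hinv, sub_eq_add_neg]
    have e2 : (Hxu k)ᵀ * X k + Huu k * U k + Huθ k + (fu k)ᵀ * Λ (k + 1)
        = Qux k * X k + Quu k * U k + Quθ k := by
      rw [hΛ (k + 1) (by omega), hXs k hk, hQux k hk, hQuu k hk, hQuθ k hk]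
      simp only [Matrix.add_mul, Matrix.mul_add, Matrix.mul_assoc]
      abel
    constructor
    · have hQuxT : (Qux k)ᵀ = Hxu k + (fx k)ᵀ * Vxx (k + 1) * fu k := by
        rw [hQux k hk]
        simp [Matrix.transpose_add, Matrix.transpose_mul, hVsym (k + 1) hk,
          Matrix.mul_assoc]
      have e3 : (Qux k)ᵀ * U k
          = -((Qux k)ᵀ * (Quu k)⁻¹ * Qux k * X k) - (Qux k)ᵀ * (Quu k)⁻¹ * Quθ k := by
        rw [hU k hk, hK k hk, hKff k hk]
        simp [Matrix.mul_add, Matrix.mul_neg, ← Matrix.mul_assoc, sub_eq_add_neg]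
      have e4 : Hxx k * X k + Hxu k * U k + Hxθ k + (fx k)ᵀ * Λ (k + 1)
          = Qxx k * X k + (Qux k)ᵀ * U k + Qxθ k := by
        rw [hΛ (k + 1) (by omega), hXs k hk, hQxx k hk, hQxθ k hk, hQuxT]
        simp only [Matrix.add_mul, Matrix.mul_add, Matrix.mul_assoc]
        abel
      rw [e4, e3, hΛ k (le_of_lt hk), hVxx k hk, hVxθ k hk]
      simp only [Matrix.sub_mul, Matrix.mul_assoc]
      abel
    · rw [e2, e1]
      abel
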